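/- Let Λ' ⊂ ℝ^n be a full-rank lattice, σ_s, σ_w > 0, α = σ_s²/(σ_s²+σ_w²), σ_eff² = σ_s²σ_w²/(σ_s²+σ_w²). Let X ~ D_{Λ', σ_s} and W ~ N(0, σ_w² I_n) be independent and let g be the probability density of W_eff = (1−α)X + αW. Then for every w ∈ ℝ^n, g(w) ≤ (1 + ε_{Λ'}(√α·σ_s)) · f_{σ_eff}(w), where ε_{Λ'} denotes the flatness factor of Λ'. -/

import Mathlib

open MeasureTheory Real Filter Pointwise
open scoped ENNReal RealInnerProductSpace

noncomputable section

/-- The (continuous) Gaussian density with parameter `σ` on `ℝⁿ`: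
`f_σ(x) = (2πσ²)^{-n/2} exp(-‖x‖²/(2σ²))`. -/
def gaussF (n : ℕ) (σ : ℝ) (x : EuclideanSpace ℝ (Fin n)) : ℝ :=
  (2 * π * σ ^ 2) ^ (-(n : ℝ) / 2) * Real.exp (-‖x‖ ^ 2 / (2 * σ ^ 2))

/-- The Gaussian mass `f_σ(S) = Σ_{y ∈ S} f_σ(y)` of a (countable) set `S ⊆ ℝⁿ`. -/
def gaussMass (n : ℕ) (σ : ℝ) (S : Set (EuclideanSpace ℝ (Fin n))) : ℝ :=
  ∑' y : S, gaussF n σ y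

/-- The Gaussian measure `N(0, σ² Iₙ)` on `ℝⁿ`, given by its density w.r.t. Lebesgue measure. -/
def gaussMeasure (n : ℕ) (σ : ℝ) : Measure (EuclideanSpace ℝ (Fin n)) :=
  volume.withDensity fun x => ENNReal.ofReal (gaussF n σ x)

/-- The coset `S + t` of a set `S ⊆ ℝⁿ`, i.e. `{x | x - t ∈ S}`. -/
def coset (n : ℕ) (S : Set (EuclideanSpace ℝ (Fin n))) (t : EuclideanSpace ℝ (Fin n)) :
    Set (EuclideanSpace ℝ (Fin n)) := {x | x - t ∈ S}

/-- The Voronoi cell of `S`: `{x | ⟪x,y⟫ ≤ ‖y‖²/2 for all y ∈ S}`. -/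
def voronoi (n : ℕ) (S : Set (EuclideanSpace ℝ (Fin n))) : Set (EuclideanSpace ℝ (Fin n)) :=
  {x | ∀ y ∈ S, ⟪x, y⟫ ≤ ‖y‖ ^ 2 / 2}

/-- The inverse error function `err⁻¹_ε(Λ)`: the least `s > 0` such that a standard Gaussian
leaves `s · V(Λ)` with probability at most `ε`. -/
def errInv (n : ℕ) (ε : ℝ) (S : Set (EuclideanSpace ℝ (Fin n))) : ℝ :=
  sInf {s : ℝ | 0 < s ∧ gaussMeasure n 1 ((s • voronoi n S)ᶜ) ≤ ENNReal.ofReal ε}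

/-- The Shannon entropy (in nats) of the discrete Gaussian `D_{S,σ}` supported on `S`,
which assigns mass `f_σ(y)/f_σ(S)` to each `y ∈ S`. -/
def dgEntropy (n : ℕ) (σ : ℝ) (S : Set (EuclideanSpace ℝ (Fin n))) : ℝ :=
  -∑' y : S, (gaussF n σ y / gaussMass n σ S) * Real.log (gaussF n σ y / gaussMass n σ S)

/-- The flatness factor `ε_Λ(σ) = sup_{x ∈ V(Λ)} |V(Λ)·f_σ(Λ+x) − 1|`. -/
def flatness (n : ℕ) (L : Submodule ℤ (EuclideanSpace ℝ (Fin n))) (σ : ℝ) : ℝ :=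
  ⨆ x : voronoi n (L : Set (EuclideanSpace ℝ (Fin n))),
    |ZLattice.covolume L volume *
        gaussMass n σ (coset n (L : Set (EuclideanSpace ℝ (Fin n))) x) - 1|

section lemmasDUB
namespace DensityUB

variable {n : ℕ}

local notation "E" => EuclideanSpace ℝ (Fin n)

lemma gaussF_nonneg (σ : ℝ) (x : E) : 0 ≤ gaussF n σ x := by
  unfold gaussF; positivity

/-- 1-D Gaussian summability over ℤ. -/
lemma summable_int_gauss {c : ℝ} (hc : 0 < c) :
    Summable fun k : ℤ => rexp (-c * (k : ℝ) ^ 2) := by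
  have key : Summable fun k : ℕ => rexp (-c * (k : ℝ) ^ 2) := by
    have hgeom : Summable fun k : ℕ => rexp (-c) ^ k :=
      summable_geometric_of_lt_one (Real.exp_pos _).le
        (Real.exp_lt_one_iff.2 (neg_lt_zero.2 hc))
    refine Summable.of_nonneg_of_le (fun k => (Real.exp_pos _).le) (fun k => ?_) hgeom
    rw [← Real.exp_nat_mul]
    apply Real.exp_le_exp.2
    have : (k : ℝ) ≤ (k : ℝ) ^ 2 := by
      rcases Nat.eq_zero_or_pos k with h | h
      · simp [h]
      · have h1 : (1 : ℝ) ≤ (k : ℝ) := by exact_mod_cast h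
        nlinarith
    nlinarith
  refine Summable.of_nat_of_neg ?_ ?_ <;> simpa using key

/-- Summability of products of 1-D Gaussians over `Fin d → ℤ`. -/
lemma summable_pi_fin_gauss {c : ℝ} (hc : 0 < c) :
    ∀ d : ℕ, Summable fun k : Fin d → ℤ => ∏ i, rexp (-c * (k i : ℝ) ^ 2)
  | 0 => by
      simp only [Finset.univ_eq_empty, Finset.prod_empty]
      exact summable_of_finite_support (Set.Finite.subset (Set.finite_univ) (by simp))
  | (d + 1) => by
      have h1 := summable_int_gauss hc
      have h2 := summable_pi_fin_gauss hc d
      have := (h1.mul_of_nonneg h2 (fun k => (Real.exp_pos _).le)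
        (fun k => Finset.prod_nonneg fun i _ => (Real.exp_pos _).le))
      have he : Summable fun k : Fin (d+1) → ℤ =>
          rexp (-c * (k 0 : ℝ) ^ 2) * ∏ i : Fin d, rexp (-c * (k i.succ : ℝ) ^ 2) := by
        have := ((Fin.consEquiv fun _ : Fin (d+1) => ℤ).symm.summable_iff (f := fun p : ℤ × (Fin d → ℤ) =>
          rexp (-c * (p.1 : ℝ) ^ 2) * ∏ i, rexp (-c * (p.2 i : ℝ) ^ 2))).2 this
        exact this
      exact he.congr fun k => (Fin.prod_univ_succ (f := fun i : Fin (d+1) => rexp (-c * (k i : ℝ) ^ 2))).symm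

/-- Summability of products of 1-D Gaussians over `ι → ℤ` for any fintype. -/
lemma summable_pi_gauss {ι : Type*} [Fintype ι] {c : ℝ} (hc : 0 < c) :
    Summable fun k : ι → ℤ => ∏ i, rexp (-c * (k i : ℝ) ^ 2) := by
  classical
  let e := (Fintype.equivFin ι).symm
  have := summable_pi_fin_gauss hc (Fintype.card ι)
  set d := Fintype.card ι with hd
  let e := Fintype.equivFin ι
  let eqv : (ι → ℤ) ≃ (Fin d → ℤ) := Equiv.arrowCongr e (Equiv.refl ℤ)
  have he : Summable ((fun m : Fin d → ℤ => ∏ j, rexp (-c * (m j : ℝ) ^ 2)) ∘ eqv) :=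
    this.comp_injective eqv.injective
  refine he.congr fun k => ?_
  show ∏ j, rexp (-c * ((k (e.symm j) : ℤ) : ℝ) ^ 2) = _
  exact Fintype.prod_equiv e.symm _ _ fun j => rfl
end DensityUB

section part2
set_option synthInstance.maxHeartbeats 400000
set_option maxHeartbeats 1000000
namespace DensityUB

variable {n : ℕ}
local notation "E" => EuclideanSpace ℝ (Fin n)

variable (L : Submodule ℤ (EuclideanSpace ℝ (Fin n))) [DiscreteTopology L] [IsZLattice ℝ L]

lemma summable_gauss_lattice {a : ℝ} (ha : 0 < a) :
    Summable fun lam : L => rexp (-a * ‖(lam : E)‖ ^ 2) := by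
  classical
  let b := Module.Free.chooseBasis ℤ L
  set ι := Module.Free.ChooseBasisIndex ℤ L with hι
  let B := Module.Basis.ofZLatticeBasis ℝ L b
  let T : EuclideanSpace ℝ (Fin n) →L[ℝ] (ι → ℝ) :=
    LinearMap.toContinuousLinearMap (B.equivFun : _ →ₗ[ℝ] (ι → ℝ))
  set C := ‖T‖ with hCdef
  have hbound : ∀ lam : L, ∀ i : ι, |(b.repr lam i : ℝ)| ≤ C * ‖(lam : E)‖ := by
    intro lam i
    have h1 : ((b.repr lam i : ℤ) : ℝ) = B.equivFun (lam : E) i := by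
      rw [Module.Basis.equivFun_apply]
      exact (Module.Basis.ofZLatticeBasis_repr_apply ℝ L b lam i).symm
    rw [h1]
    have h2 : B.equivFun (lam : E) i = T (lam : E) i := rfl
    rw [h2, ← Real.norm_eq_abs]
    exact (norm_le_pi_norm (T (lam : E)) i).trans (T.le_opNorm _)
  set c := a / ((Fintype.card ι) * C ^ 2 + 1) with hcdef
  have hCnn : (0:ℝ) ≤ C := by rw [hCdef]; exact norm_nonneg T
  have hpos : (0:ℝ) < (Fintype.card ι) * C ^ 2 + 1 := by positivity
  have hc : 0 < c := div_pos ha hpos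
  let F : (ι → ℤ) → ℝ := fun k => ∏ i, rexp (-c * (k i : ℝ) ^ 2)
  have hF : Summable F := summable_pi_gauss hc
  have hg : Summable (F ∘ (b.equivFun.toEquiv : L ≃ (ι → ℤ))) :=
    hF.comp_injective b.equivFun.toEquiv.injective
  refine Summable.of_nonneg_of_le (fun lam => (Real.exp_pos _).le) (fun lam => ?_) hg
  have hFl : (F ∘ (b.equivFun.toEquiv : L ≃ (ι → ℤ))) lam
      = rexp (-(c * ∑ i, ((b.repr lam i : ℤ) : ℝ) ^ 2)) := by
    calc (∏ i, rexp (-c * (((b.equivFun lam) i : ℤ) : ℝ) ^ 2))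
        = ∏ i, rexp (-(c * ((b.repr lam i : ℤ) : ℝ) ^ 2)) := by
          refine Finset.prod_congr rfl fun i _ => ?_
          rw [Module.Basis.equivFun_apply, neg_mul]
      _ = rexp (∑ i, -(c * ((b.repr lam i : ℤ) : ℝ) ^ 2)) := (Real.exp_sum _ _).symm
      _ = rexp (-(c * ∑ i, ((b.repr lam i : ℤ) : ℝ) ^ 2)) := by
          congr 1; rw [Finset.sum_neg_distrib, Finset.mul_sum]
  rw [hFl, Real.exp_le_exp]
  have hsumsq : ∑ i, ((b.repr lam i : ℤ) : ℝ) ^ 2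
      ≤ ((Fintype.card ι) * C ^ 2 + 1) * ‖(lam : E)‖ ^ 2 := by
    have h1 : ∀ i ∈ Finset.univ, ((b.repr lam i : ℤ) : ℝ) ^ 2 ≤ (C * ‖(lam : E)‖) ^ 2 := by
      intro i _
      have := hbound lam i
      nlinarith [abs_nonneg ((b.repr lam i : ℤ) : ℝ), sq_abs ((b.repr lam i : ℤ) : ℝ)]
    calc ∑ i, ((b.repr lam i : ℤ) : ℝ) ^ 2 ≤ ∑ _i : ι, (C * ‖(lam : E)‖) ^ 2 :=
          Finset.sum_le_sum h1
      _ = (Fintype.card ι) * (C * ‖(lam : E)‖) ^ 2 := by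
          rw [Finset.sum_const, Finset.card_univ, nsmul_eq_mul]
      _ ≤ ((Fintype.card ι) * C ^ 2 + 1) * ‖(lam : E)‖ ^ 2 := by
          nlinarith [norm_nonneg (lam : E), sq_nonneg (‖(lam:E)‖), Nat.cast_nonneg (α := ℝ) (Fintype.card ι)]
  have hkey : c * (∑ i, ((b.repr lam i : ℤ) : ℝ) ^ 2) ≤ a * ‖(lam : E)‖ ^ 2 := by
    rw [hcdef, div_mul_eq_mul_div, div_le_iff₀ hpos]
    calc a * (∑ i, ((b.repr lam i : ℤ) : ℝ) ^ 2)
        ≤ a * (((Fintype.card ι) * C ^ 2 + 1) * ‖(lam : E)‖ ^ 2) :=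
          mul_le_mul_of_nonneg_left hsumsq ha.le
      _ = a * ‖(lam : E)‖ ^ 2 * ((Fintype.card ι) * C ^ 2 + 1) := by ring
  rw [neg_mul]
  linarith

lemma summable_gauss_lattice_shift {a : ℝ} (ha : 0 < a) (v : EuclideanSpace ℝ (Fin n)) :
    Summable fun lam : L => rexp (-a * ‖(lam : E) + v‖ ^ 2) := by
  have base := (summable_gauss_lattice L (half_pos ha)).mul_left (rexp (a * ‖v‖ ^ 2))
  refine Summable.of_nonneg_of_le (fun lam => (Real.exp_pos _).le) (fun lam => ?_) base
  rw [← Real.exp_add, Real.exp_le_exp]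
  have h1 : ‖(lam : E)‖ ^ 2 ≤ 2 * ‖(lam : E) + v‖ ^ 2 + 2 * ‖v‖ ^ 2 := by
    have h2 : ‖(lam : E)‖ ≤ ‖(lam : E) + v‖ + ‖v‖ := by
      have := norm_add_le ((lam : E) + v) (-v)
      simpa using this
    nlinarith [norm_nonneg ((lam : E) + v), norm_nonneg v, norm_nonneg (lam : E),
      sq_nonneg (‖(lam : E) + v‖ - ‖v‖)]
  nlinarith [mul_le_mul_of_nonneg_left h1 (half_pos ha).le]

lemma summable_gaussF_shift {σ : ℝ} (hσ : 0 < σ) (v : EuclideanSpace ℝ (Fin n)) :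
    Summable fun lam : L => gaussF n σ ((lam : E) + v) := by
  have ha : (0:ℝ) < 1 / (2 * σ ^ 2) := by positivity
  have := (summable_gauss_lattice_shift L ha v).mul_left ((2 * π * σ ^ 2) ^ (-(n : ℝ) / 2))
  refine this.congr fun lam => ?_
  unfold gaussF
  congr 1
  rw [neg_mul]
  congr 1
  field_simp

lemma summable_gaussF {σ : ℝ} (hσ : 0 < σ) :
    Summable fun lam : L => gaussF n σ (lam : E) := by
  have := summable_gaussF_shift L hσ 0
  simpa using this

end DensityUB
end part2

section part3
namespace DensityUB

variable {n : ℕ}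
local notation "E" => EuclideanSpace ℝ (Fin n)

lemma integrable_gauss_base {b : ℝ} (hb : 0 < b) :
    Integrable (fun ξ : E => rexp (-b * ‖ξ‖ ^ 2)) := by
  have h := (GaussianFourier.integrable_cexp_neg_mul_sq_norm_add
      (b := (b : ℂ)) (by simpa using hb) 0 (0 : EuclideanSpace ℝ (Fin n))).norm
  refine h.congr (Filter.Eventually.of_forall fun v => ?_)
  simp only [Complex.norm_exp]
  norm_num
  left
  norm_cast

lemma gauss_prod_identity {a : ℝ} (y z ξ : E) :
    rexp (-(2*a) * ‖y - ξ‖ ^ 2) * rexp (-(2*a) * ‖z - ξ‖ ^ 2)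
      = rexp (-a * ‖y - z‖ ^ 2) * rexp (-(4*a) * ‖ξ - (2⁻¹ : ℝ) • (y + z)‖ ^ 2) := by
  rw [← Real.exp_add, ← Real.exp_add]
  congr 1
  have h1 : ‖y - ξ‖ ^ 2 = ‖y‖ ^ 2 - 2 * ⟪y, ξ⟫ + ‖ξ‖ ^ 2 := norm_sub_sq_real y ξ
  have h2 : ‖z - ξ‖ ^ 2 = ‖z‖ ^ 2 - 2 * ⟪z, ξ⟫ + ‖ξ‖ ^ 2 := norm_sub_sq_real z ξ
  have h3 : ‖y - z‖ ^ 2 = ‖y‖ ^ 2 - 2 * ⟪y, z⟫ + ‖z‖ ^ 2 := norm_sub_sq_real y z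
  have h4 : ‖ξ - (2⁻¹ : ℝ) • (y + z)‖ ^ 2
      = ‖ξ‖ ^ 2 - 2 * ⟪ξ, (2⁻¹ : ℝ) • (y + z)⟫ + ‖(2⁻¹ : ℝ) • (y + z)‖ ^ 2 :=
    norm_sub_sq_real ξ _
  have h5 : ⟪ξ, (2⁻¹ : ℝ) • (y + z)⟫ = 2⁻¹ * (⟪y, ξ⟫ + ⟪z, ξ⟫) := by
    rw [real_inner_smul_right, inner_add_right, real_inner_comm ξ y, real_inner_comm ξ z]
  have h6 : ‖(2⁻¹ : ℝ) • (y + z)‖ ^ 2 = 4⁻¹ * (‖y‖ ^ 2 + 2 * ⟪y, z⟫ + ‖z‖ ^ 2) := by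
    rw [norm_smul, Real.norm_eq_abs, mul_pow, norm_add_sq_real]
    norm_num
  rw [h1, h2, h4, h5, h6, h3]
  ring

lemma posdef {a : ℝ} (ha : 0 < a) {P : Type*} (s : Finset P) (p : P → E) (c : P → ℝ) :
    0 ≤ ∑ j ∈ s, ∑ k ∈ s, c j * c k * rexp (-a * ‖p j - p k‖ ^ 2) := by
  classical
  set I₀ := ∫ ξ : E, rexp (-(4*a) * ‖ξ‖ ^ 2) with hI0
  have hI0pos : 0 < I₀ := by
    rw [hI0, GaussianFourier.integral_rexp_neg_mul_sq_norm (by positivity : (0:ℝ) < 4*a)]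
    positivity
  set g : P → E → ℝ := fun j ξ => c j * rexp (-(2*a) * ‖p j - ξ‖ ^ 2) with hg
  have hbase : Integrable (fun ξ : E => rexp (-(4*a) * ‖ξ‖ ^ 2)) :=
    integrable_gauss_base (by positivity)
  have hid : ∀ j k : P, ∀ ξ : E, g j ξ * g k ξ
      = (c j * c k * rexp (-a * ‖p j - p k‖ ^ 2)) *
        rexp (-(4*a) * ‖ξ - (2⁻¹ : ℝ) • (p j + p k)‖ ^ 2) := by
    intro j k ξ
    rw [hg]
    simp only
    rw [mul_mul_mul_comm, gauss_prod_identity]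
    ring
  have hint : ∀ j k : P, Integrable (fun ξ : E => g j ξ * g k ξ) := by
    intro j k
    have := (hbase.comp_sub_right ((2⁻¹ : ℝ) • (p j + p k))).const_mul
      (c j * c k * rexp (-a * ‖p j - p k‖ ^ 2))
    exact this.congr (Filter.Eventually.of_forall fun ξ => (hid j k ξ).symm)
  have hval : ∀ j k : P, ∫ ξ : E, g j ξ * g k ξ
      = c j * c k * rexp (-a * ‖p j - p k‖ ^ 2) * I₀ := by
    intro j k
    rw [show (fun ξ : E => g j ξ * g k ξ) = fun ξ : E =>
      (c j * c k * rexp (-a * ‖p j - p k‖ ^ 2)) *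
        rexp (-(4*a) * ‖ξ - (2⁻¹ : ℝ) • (p j + p k)‖ ^ 2) from funext (hid j k)]
    rw [MeasureTheory.integral_const_mul]
    congr 1
    exact MeasureTheory.integral_sub_right_eq_self
      (fun v : EuclideanSpace ℝ (Fin n) => rexp (-(4*a) * ‖v‖ ^ 2)) _
  have h0 : 0 ≤ ∫ ξ : E, (∑ j ∈ s, g j ξ) ^ 2 := integral_nonneg fun ξ => sq_nonneg _
  have hswap : ∫ ξ : E, (∑ j ∈ s, g j ξ) ^ 2
      = ∑ j ∈ s, ∑ k ∈ s, (c j * c k * rexp (-a * ‖p j - p k‖ ^ 2)) * I₀ := by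
    have hexp : ∀ ξ : E, (∑ j ∈ s, g j ξ) ^ 2 = ∑ j ∈ s, ∑ k ∈ s, g j ξ * g k ξ := by
      intro ξ
      rw [sq, Finset.sum_mul_sum]
    simp_rw [hexp]
    rw [MeasureTheory.integral_finset_sum s (fun j _ =>
      integrable_finset_sum s (fun k _ => hint j k))]
    refine Finset.sum_congr rfl fun j _ => ?_
    rw [MeasureTheory.integral_finset_sum s (fun k _ => hint j k)]
    exact Finset.sum_congr rfl fun k _ => hval j k
  rw [hswap] at h0
  have : (∑ j ∈ s, ∑ k ∈ s, c j * c k * rexp (-a * ‖p j - p k‖ ^ 2)) * I₀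
      = ∑ j ∈ s, ∑ k ∈ s, (c j * c k * rexp (-a * ‖p j - p k‖ ^ 2)) * I₀ := by
    rw [Finset.sum_mul]
    exact Finset.sum_congr rfl fun j _ => by rw [Finset.sum_mul]
  rw [← this] at h0
  by_contra hneg
  push_neg at hneg
  nlinarith

end DensityUB
end part3

section part4
namespace DensityUB

variable {n : ℕ}
local notation "E" => EuclideanSpace ℝ (Fin n)

variable (L : Submodule ℤ (EuclideanSpace ℝ (Fin n))) [DiscreteTopology L] [IsZLattice ℝ L]

/-- The Gaussian sum over a lattice is maximized at the zero shift. -/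
lemma lattice_gauss_le {a : ℝ} (ha : 0 < a) (x : EuclideanSpace ℝ (Fin n)) :
    (∑' lam : L, rexp (-a * ‖(lam : E) + x‖ ^ 2))
      ≤ ∑' lam : L, rexp (-a * ‖(lam : E)‖ ^ 2) := by
  classical
  set ι := Module.Free.ChooseBasisIndex ℤ L with hι
  let b := Module.Free.chooseBasis ℤ L
  let eG : (ι → ℤ) ≃ L := b.equivFun.toEquiv.symm
  let φ : (ι → ℤ) → EuclideanSpace ℝ (Fin n) := fun k => ((eG k : L) : E)
  have hφsub : ∀ j l : ι → ℤ, φ j - φ l = φ (j - l) := by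
    intro j l
    show ((eG j : L) : E) - ((eG l : L) : E) = ((eG (j - l) : L) : E)
    rw [show eG (j - l) = eG j - eG l from b.equivFun.symm.map_sub j l]
    push_cast
    ring
  have hφneg : ∀ k : ι → ℤ, φ (-k) = -φ k := by
    intro k
    show ((eG (-k) : L) : E) = -((eG k : L) : E)
    rw [show eG (-k) = -eG k from b.equivFun.symm.map_neg k]
    push_cast
    ring
  set h₀ : (ι → ℤ) → ℝ := fun k => rexp (-a * ‖φ k‖ ^ 2) with hh0
  set hp : (ι → ℤ) → ℝ := fun k => rexp (-a * ‖φ k + x‖ ^ 2) with hhp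
  set hm : (ι → ℤ) → ℝ := fun k => rexp (-a * ‖φ k - x‖ ^ 2) with hhm
  have Sh₀ : Summable h₀ := (summable_gauss_lattice L ha).comp_injective eG.injective
  have Shp : Summable hp := (summable_gauss_lattice_shift L ha x).comp_injective eG.injective
  have Shm : Summable hm := by
    have := (summable_gauss_lattice_shift L ha (-x)).comp_injective eG.injective
    refine this.congr fun k => ?_
    simp [hhm, sub_eq_add_neg, φ]
  have hnn : ∀ (f : (ι → ℤ) → ℝ), (f = h₀ ∨ f = hp ∨ f = hm) → ∀ k, 0 ≤ f k := by
    rintro f (rfl | rfl | rfl) k <;> exact (Real.exp_pos _).le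
  -- the boxes
  let Box : ℕ → Finset (ι → ℤ) := fun N => Fintype.piFinset fun _ => Finset.Icc (-(N:ℤ)) (N:ℤ)
  have hBoxmem : ∀ N : ℕ, ∀ j : ι → ℤ, j ∈ Box N ↔ ∀ i, -(N:ℤ) ≤ j i ∧ j i ≤ (N:ℤ) := by
    intro N j
    simp [Box, Fintype.mem_piFinset]
  have hBoxcard : ∀ N : ℕ, (Box N).card = (2 * N + 1) ^ (Fintype.card ι) := by
    intro N
    rw [show (Box N).card = ∏ _i : ι, (Finset.Icc (-(N:ℤ)) (N:ℤ)).card from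
      Fintype.card_piFinset _, Finset.prod_const, Finset.card_univ]
    congr 1
    rw [Int.card_Icc]
    rw [show (N:ℤ) + 1 - -(N:ℤ) = ((2 * N + 1 : ℕ) : ℤ) from by push_cast; ring]
    exact Int.toNat_natCast _
  -- Step 1: positive definiteness gives the key finite inequality
  have key : ∀ N : ℕ,
      (∑ j ∈ Box N, ∑ l ∈ Box N, hp (j - l)) + (∑ j ∈ Box N, ∑ l ∈ Box N, hm (j - l))
        ≤ 2 * ∑ j ∈ Box N, ∑ l ∈ Box N, h₀ (j - l) := by
    intro N
    have H := posdef (n := n) ha ((Box N).disjSum (Box N))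
      (Sum.elim φ (fun k => φ k + x)) (Sum.elim (fun _ => (1:ℝ)) (fun _ => -1))
    rw [Finset.sum_disjSum] at H
    simp only [Finset.sum_disjSum, Sum.elim_inl, Sum.elim_inr, one_mul, mul_one,
      neg_one_mul, neg_mul, neg_neg, Finset.sum_add_distrib, Finset.sum_neg_distrib] at H
    have e1 : ∑ j ∈ Box N, ∑ l ∈ Box N, rexp (-(a * ‖φ j - φ l‖ ^ 2))
        = ∑ j ∈ Box N, ∑ l ∈ Box N, h₀ (j - l) := by
      refine Finset.sum_congr rfl fun j _ => Finset.sum_congr rfl fun l _ => ?_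
      simp only [hh0, neg_mul]
      rw [hφsub]
    have e2 : ∑ j ∈ Box N, ∑ l ∈ Box N, rexp (-(a * ‖φ j - (φ l + x)‖ ^ 2))
        = ∑ j ∈ Box N, ∑ l ∈ Box N, hm (j - l) := by
      refine Finset.sum_congr rfl fun j _ => Finset.sum_congr rfl fun l _ => ?_
      simp only [hhm, neg_mul]
      rw [show φ j - (φ l + x) = φ (j - l) - x from by rw [← hφsub]; abel]
    have e3 : ∑ j ∈ Box N, ∑ l ∈ Box N, rexp (-(a * ‖φ j + x - φ l‖ ^ 2))
        = ∑ j ∈ Box N, ∑ l ∈ Box N, hp (j - l) := by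
      refine Finset.sum_congr rfl fun j _ => Finset.sum_congr rfl fun l _ => ?_
      simp only [hhp, neg_mul]
      rw [show φ j + x - φ l = φ (j - l) + x from by rw [← hφsub]; abel]
    have e4 : ∑ j ∈ Box N, ∑ l ∈ Box N, rexp (-(a * ‖φ j + x - (φ l + x)‖ ^ 2))
        = ∑ j ∈ Box N, ∑ l ∈ Box N, h₀ (j - l) := by
      refine Finset.sum_congr rfl fun j _ => Finset.sum_congr rfl fun l _ => ?_
      simp only [hh0, neg_mul]
      rw [show φ j + x - (φ l + x) = φ (j - l) from by rw [← hφsub]; abel]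
    rw [e1, e2, e3, e4] at H
    linarith
  -- Step 2: upper bound for the h₀ double sum
  have step2 : ∀ N : ℕ, (∑ j ∈ Box N, ∑ l ∈ Box N, h₀ (j - l))
      ≤ ((Box N).card : ℝ) * ∑' k, h₀ k := by
    intro N
    have inner : ∀ j : ι → ℤ, ∑ l ∈ Box N, h₀ (j - l) ≤ ∑' k, h₀ k := by
      intro j
      rw [show ∑ l ∈ Box N, h₀ (j - l) = ∑ m ∈ (Box N).image (fun l => j - l), h₀ m by
        rw [Finset.sum_image (fun y _ z _ h => sub_right_injective h)]]
      exact Summable.sum_le_tsum _ (fun m _ => (Real.exp_pos _).le) Sh₀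
    calc ∑ j ∈ Box N, ∑ l ∈ Box N, h₀ (j - l)
        ≤ ∑ _j ∈ Box N, ∑' k, h₀ k := Finset.sum_le_sum fun j _ => inner j
      _ = ((Box N).card : ℝ) * ∑' k, h₀ k := by
          rw [Finset.sum_const, nsmul_eq_mul]
  -- Step 3: lower bound for any finite piece
  have step3 : ∀ (f : (ι → ℤ) → ℝ), (∀ k, 0 ≤ f k) → ∀ (Φ : Finset (ι → ℤ)) (K M : ℕ),
      (∀ m ∈ Φ, ∀ i, |m i| ≤ (K:ℤ)) →
      ((Box M).card : ℝ) * ∑ m ∈ Φ, f m ≤ ∑ j ∈ Box (K + M), ∑ l ∈ Box (K + M), f (j - l) := by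
    intro f hf Φ K M hΦ
    have himg : (Φ ×ˢ Box M).image (fun q : (ι → ℤ) × (ι → ℤ) => (q.2 + q.1, q.2))
        ⊆ Box (K + M) ×ˢ Box (K + M) := by
      intro q hq
      simp only [Finset.mem_image] at hq
      obtain ⟨⟨m, l⟩, hml, rfl⟩ := hq
      rw [Finset.mem_product] at hml
      obtain ⟨hmem, hl⟩ := hml
      have hl' := (hBoxmem M l).1 hl
      rw [Finset.mem_product]
      refine ⟨(hBoxmem _ _).2 fun i => ?_, (hBoxmem _ _).2 fun i => ?_⟩
      · have h1 := hΦ m hmem i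
        have h2 := hl' i
        rw [abs_le] at h1
        simp only [Pi.add_apply]
        push_cast
        omega
      · have h2 := hl' i
        push_cast
        omega
    have hinj : ∀ q1 ∈ Φ ×ˢ Box M, ∀ q2 ∈ Φ ×ˢ Box M,
        (fun q : (ι → ℤ) × (ι → ℤ) => (q.2 + q.1, q.2)) q1
          = (fun q : (ι → ℤ) × (ι → ℤ) => (q.2 + q.1, q.2)) q2 → q1 = q2 := by
      intro q1 _ q2 _ h
      simp only [Prod.mk.injEq] at h
      obtain ⟨h1, h2⟩ := h
      ext1
      · have h3 : q1.2 + q1.1 = q2.2 + q2.1 := h1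
        rw [h2] at h3
        exact add_left_cancel h3
      · exact h2
    calc ((Box M).card : ℝ) * ∑ m ∈ Φ, f m
        = ∑ q ∈ Φ ×ˢ Box M, f ((q.2 + q.1) - q.2) := by
          rw [Finset.sum_product]
          simp only [add_sub_cancel_left]
          rw [Finset.mul_sum]
          exact Finset.sum_congr rfl fun m _ => by rw [Finset.sum_const, nsmul_eq_mul]
      _ = ∑ q ∈ (Φ ×ˢ Box M).image (fun q : (ι → ℤ) × (ι → ℤ) => (q.2 + q.1, q.2)),
            f (q.1 - q.2) := by
          rw [Finset.sum_image hinj]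
      _ ≤ ∑ q ∈ Box (K + M) ×ˢ Box (K + M), f (q.1 - q.2) :=
          Finset.sum_le_sum_of_subset_of_nonneg himg (fun q _ _ => hf _)
      _ = ∑ j ∈ Box (K + M), ∑ l ∈ Box (K + M), f (j - l) := by
          rw [Finset.sum_product]
  -- Step 4: pass to the limit
  set T₀ : ℝ := ∑' k, h₀ k with hT0
  have hT0nn : 0 ≤ T₀ := tsum_nonneg fun k => (Real.exp_pos _).le
  have main : (∑' k, (hp k + hm k)) ≤ 2 * T₀ := by
    refine Summable.tsum_le_of_sum_le (Shp.add Shm) fun Φ => ?_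
    set K := Φ.sup (fun m => Finset.univ.sup fun i => (m i).natAbs) with hK
    have hΦK : ∀ m ∈ Φ, ∀ i, |m i| ≤ (K:ℤ) := by
      intro m hmem i
      have h1 : (m i).natAbs ≤ Finset.univ.sup (fun i => (m i).natAbs) :=
        Finset.le_sup (f := fun i => (m i).natAbs) (Finset.mem_univ i)
      have h2 : Finset.univ.sup (fun i => (m i).natAbs) ≤ K :=
        Finset.le_sup (f := fun m => Finset.univ.sup fun i => (m i).natAbs) hmem
      rw [Int.abs_eq_natAbs]
      exact_mod_cast le_trans h1 h2
    have hbound : ∀ M : ℕ, ∑ m ∈ Φ, (hp m + hm m)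
        ≤ 2 * (((Box (K + M)).card : ℝ) / ((Box M).card : ℝ)) * T₀ := by
      intro M
      have hMpos : (0:ℝ) < ((Box M).card : ℝ) := by
        rw [hBoxcard]
        positivity
      have h3 := step3 (fun k => hp k + hm k)
        (fun k => add_nonneg (Real.exp_pos _).le (Real.exp_pos _).le) Φ K M hΦK
      have hsplit : ∑ j ∈ Box (K+M), ∑ l ∈ Box (K+M), (hp (j-l) + hm (j-l))
          = (∑ j ∈ Box (K+M), ∑ l ∈ Box (K+M), hp (j-l))
            + (∑ j ∈ Box (K+M), ∑ l ∈ Box (K+M), hm (j-l)) := by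
        rw [← Finset.sum_add_distrib]
        exact Finset.sum_congr rfl fun j _ => Finset.sum_add_distrib
      have hchain : ((Box M).card : ℝ) * ∑ m ∈ Φ, (hp m + hm m)
          ≤ 2 * (((Box (K + M)).card : ℝ) * T₀) := by
        calc ((Box M).card : ℝ) * ∑ m ∈ Φ, (hp m + hm m)
            ≤ ∑ j ∈ Box (K+M), ∑ l ∈ Box (K+M), (hp (j-l) + hm (j-l)) := h3
          _ = _ + _ := hsplit
          _ ≤ 2 * ∑ j ∈ Box (K+M), ∑ l ∈ Box (K+M), h₀ (j-l) := key (K+M)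
          _ ≤ 2 * (((Box (K + M)).card : ℝ) * T₀) := by
              have := step2 (K+M)
              linarith
      have h4 : ∑ m ∈ Φ, (hp m + hm m)
          ≤ 2 * (((Box (K+M)).card : ℝ) * T₀) / ((Box M).card : ℝ) := by
        rw [le_div_iff₀ hMpos]
        calc (∑ m ∈ Φ, (hp m + hm m)) * ((Box M).card : ℝ)
            = ((Box M).card : ℝ) * ∑ m ∈ Φ, (hp m + hm m) := mul_comm _ _
          _ ≤ _ := hchain
      calc ∑ m ∈ Φ, (hp m + hm m) ≤ _ := h4
        _ = 2 * (((Box (K + M)).card : ℝ) / ((Box M).card : ℝ)) * T₀ := by ring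
    have htendsto : Filter.Tendsto
        (fun M : ℕ => 2 * (((Box (K + M)).card : ℝ) / ((Box M).card : ℝ)) * T₀)
        Filter.atTop (nhds (2 * T₀)) := by
      have hratio : ∀ M : ℕ, ((Box (K + M)).card : ℝ) / ((Box M).card : ℝ)
          = ((2*(K:ℝ) + (2*M+1)) / (2*(M:ℝ)+1)) ^ (Fintype.card ι) := by
        intro M
        rw [hBoxcard, hBoxcard]
        push_cast
        rw [show (2*(K:ℝ) + (2*(M:ℝ)+1)) = 2*((K:ℝ)+(M:ℝ))+1 from by ring, div_pow]
      have hden : Filter.Tendsto (fun M : ℕ => 2*(M:ℝ)+1) Filter.atTop Filter.atTop := by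
        apply Filter.tendsto_atTop_add_const_right
        exact Filter.Tendsto.const_mul_atTop two_pos tendsto_natCast_atTop_atTop
      have hfrac : Filter.Tendsto (fun M : ℕ => (2*(K:ℝ)) / (2*(M:ℝ)+1))
          Filter.atTop (nhds 0) := Filter.Tendsto.div_atTop tendsto_const_nhds hden
      have hbase : Filter.Tendsto (fun M : ℕ => (2*(K:ℝ) + (2*M+1)) / (2*(M:ℝ)+1))
          Filter.atTop (nhds 1) := by
        have heq : ∀ M : ℕ, (2*(K:ℝ) + (2*M+1)) / (2*(M:ℝ)+1)
            = (2*(K:ℝ)) / (2*(M:ℝ)+1) + 1 := by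
          intro M
          have : (2*(M:ℝ)+1) ≠ 0 := by positivity
          field_simp
        simp_rw [heq]
        simpa using hfrac.add tendsto_const_nhds
      have hpow : Filter.Tendsto (fun M : ℕ => ((2*(K:ℝ) + (2*M+1)) / (2*(M:ℝ)+1)) ^ (Fintype.card ι))
          Filter.atTop (nhds 1) := by
        simpa using hbase.pow (Fintype.card ι)
      have := (hpow.const_mul 2).mul_const T₀
      simp only [mul_one] at this
      refine Filter.Tendsto.congr (fun M => ?_) this
      rw [hratio]
    exact ge_of_tendsto' htendsto hbound
  -- conclude
  have hsym : (∑' k, hm k) = ∑' k, hp k := by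
    rw [← (Equiv.neg (ι → ℤ)).tsum_eq hm]
    refine tsum_congr fun k => ?_
    show rexp (-a * ‖φ (-k) - x‖ ^ 2) = rexp (-a * ‖φ k + x‖ ^ 2)
    rw [hφneg, show -φ k - x = -(φ k + x) from by abel, norm_neg]
  rw [Summable.tsum_add Shp Shm, hsym] at main
  have hfinal : (∑' k, hp k) ≤ T₀ := by linarith
  have t1 : (∑' k, hp k) = ∑' lam : L, rexp (-a * ‖(lam : E) + x‖ ^ 2) :=
    Equiv.tsum_eq eG (fun lam : L => rexp (-a * ‖(lam : E) + x‖ ^ 2))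
  have t0 : T₀ = ∑' lam : L, rexp (-a * ‖(lam : E)‖ ^ 2) :=
    Equiv.tsum_eq eG (fun lam : L => rexp (-a * ‖(lam : E)‖ ^ 2))
  rw [← t1, ← t0]
  exact hfinal

end DensityUB
end part4

section part5
namespace DensityUB

variable {n : ℕ}
local notation "E" => EuclideanSpace ℝ (Fin n)

lemma gaussF_eq' {σ : ℝ} (hσ : 0 < σ) (y : E) :
    gaussF n σ y = (2 * π * σ ^ 2) ^ (-(n : ℝ) / 2) * rexp (-(1 / (2 * σ ^ 2)) * ‖y‖ ^ 2) := by
  unfold gaussF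
  congr 1
  rw [neg_div, neg_mul]
  congr 1
  field_simp

lemma gaussF_continuous (σ : ℝ) : Continuous (gaussF n σ) := by
  unfold gaussF
  exact continuous_const.mul
    (Real.continuous_exp.comp (((continuous_norm.pow 2).neg).div_const _))

lemma gaussF_integrable {σ : ℝ} (hσ : 0 < σ) : Integrable (gaussF n σ) := by
  have hb : (0:ℝ) < 1 / (2 * σ ^ 2) := by positivity
  have := ((integrable_gauss_base (n := n) hb).const_mul
    ((2 * π * σ ^ 2) ^ (-(n : ℝ) / 2)))
  exact this.congr (Filter.Eventually.of_forall fun y => (gaussF_eq' hσ y).symm)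

lemma gaussF_integral {σ : ℝ} (hσ : 0 < σ) : ∫ x : E, gaussF n σ x = 1 := by
  have hb : (0:ℝ) < 1 / (2 * σ ^ 2) := by positivity
  have h1 : ∫ x : E, gaussF n σ x = (2 * π * σ ^ 2) ^ (-(n : ℝ) / 2) *
      ∫ x : E, rexp (-(1 / (2 * σ ^ 2)) * ‖x‖ ^ 2) := by
    rw [← MeasureTheory.integral_const_mul]
    exact integral_congr_ae (Filter.Eventually.of_forall fun y => gaussF_eq' hσ y)
  rw [h1, GaussianFourier.integral_rexp_neg_mul_sq_norm hb]
  have hrank : (Module.finrank ℝ (EuclideanSpace ℝ (Fin n)) : ℝ) = (n : ℝ) := by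
    simp [finrank_euclideanSpace]
  rw [hrank]
  have hbase : π / (1 / (2 * σ ^ 2)) = 2 * π * σ ^ 2 := by
    field_simp
  rw [hbase, ← Real.rpow_add (by positivity : (0:ℝ) < 2 * π * σ ^ 2)]
  rw [show -(n:ℝ)/2 + (n:ℝ)/2 = 0 from by ring, Real.rpow_zero]

variable (L : Submodule ℤ (EuclideanSpace ℝ (Fin n))) [DiscreteTopology L] [IsZLattice ℝ L]

lemma mass_shift_le {σ : ℝ} (hσ : 0 < σ) (x : EuclideanSpace ℝ (Fin n)) :
    (∑' lam : L, gaussF n σ ((lam : E) + x)) ≤ ∑' lam : L, gaussF n σ (lam : E) := by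
  have hb : (0:ℝ) < 1 / (2 * σ ^ 2) := by positivity
  have key := lattice_gauss_le L hb x
  have hC : (0:ℝ) ≤ (2 * π * σ ^ 2) ^ (-(n : ℝ) / 2) := by positivity
  calc (∑' lam : L, gaussF n σ ((lam : E) + x))
      = (2 * π * σ ^ 2) ^ (-(n : ℝ) / 2) *
          ∑' lam : L, rexp (-(1 / (2 * σ ^ 2)) * ‖(lam : E) + x‖ ^ 2) := by
        rw [← tsum_mul_left]
        exact tsum_congr fun lam => gaussF_eq' hσ _
    _ ≤ (2 * π * σ ^ 2) ^ (-(n : ℝ) / 2) *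
          ∑' lam : L, rexp (-(1 / (2 * σ ^ 2)) * ‖(lam : E)‖ ^ 2) :=
        mul_le_mul_of_nonneg_left key hC
    _ = ∑' lam : L, gaussF n σ (lam : E) := by
        rw [← tsum_mul_left]
        exact tsum_congr fun lam => (gaussF_eq' hσ _).symm

lemma one_le_cov_mul_mass {σ : ℝ} (hσ : 0 < σ) :
    1 ≤ ZLattice.covolume L volume * ∑' lam : L, gaussF n σ (lam : E) := by
  classical
  let b := Module.Free.chooseBasis ℤ L
  set F := ZSpan.fundamentalDomain (Module.Basis.ofZLatticeBasis ℝ L b) with hFdef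
  haveI i1 : MeasurableVAdd L (EuclideanSpace ℝ (Fin n)) :=
    (inferInstance : MeasurableVAdd L.toAddSubgroup (EuclideanSpace ℝ (Fin n)))
  haveI i2 : VAddInvariantMeasure L (EuclideanSpace ℝ (Fin n)) volume :=
    (inferInstance : VAddInvariantMeasure L.toAddSubgroup (EuclideanSpace ℝ (Fin n)) volume)
  have hFD : IsAddFundamentalDomain L F volume := ZLattice.isAddFundamentalDomain b volume
  have hcov : ZLattice.covolume L volume = (volume F).toReal :=
    ZLattice.covolume_eq_measure_fundamentalDomain L volume hFD
  have hFfin : volume F ≠ ⊤ := (ZSpan.fundamentalDomain_isBounded _).measure_lt_top.ne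
  set S₀ : ℝ := ∑' lam : L, gaussF n σ (lam : E) with hS0
  have hS0nn : 0 ≤ S₀ := tsum_nonneg fun lam => gaussF_nonneg _ _
  have h1 : (1 : ℝ≥0∞) = ∫⁻ x : E, ENNReal.ofReal (gaussF n σ x) := by
    rw [← ofReal_integral_eq_lintegral_ofReal (gaussF_integrable hσ)
      (Filter.Eventually.of_forall (gaussF_nonneg σ))]
    rw [gaussF_integral hσ]
    simp
  have h2 : ∫⁻ x : E, ENNReal.ofReal (gaussF n σ x)
      = ∑' lam : L, ∫⁻ x in F, ENNReal.ofReal (gaussF n σ ((lam : E) + x)) := by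
    rw [hFD.lintegral_eq_tsum'' (fun x => ENNReal.ofReal (gaussF n σ x))]
    rfl
  have h3 : (∑' lam : L, ∫⁻ x in F, ENNReal.ofReal (gaussF n σ ((lam : E) + x)))
      = ∫⁻ x in F, ∑' lam : L, ENNReal.ofReal (gaussF n σ ((lam : E) + x)) := by
    exact (lintegral_tsum (μ := volume.restrict F)
      (f := fun (lam : L) (x : EuclideanSpace ℝ (Fin n)) =>
        ENNReal.ofReal (gaussF n σ ((lam : E) + x)))
      (fun lam => ((ENNReal.continuous_ofReal.comp
        ((gaussF_continuous σ).comp (continuous_const.add continuous_id))).measurable).aemeasurable)).symm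
  have hS : ∀ x : E, (∑' lam : L, ENNReal.ofReal (gaussF n σ ((lam : E) + x)))
      ≤ ENNReal.ofReal S₀ := by
    intro x
    rw [← ENNReal.ofReal_tsum_of_nonneg (fun lam => gaussF_nonneg _ _)
      (summable_gaussF_shift L hσ x)]
    exact ENNReal.ofReal_le_ofReal (mass_shift_le L hσ x)
  have h4 : (1 : ℝ≥0∞) ≤ volume F * ENNReal.ofReal S₀ := by
    calc (1 : ℝ≥0∞) = ∫⁻ x : E, ENNReal.ofReal (gaussF n σ x) := h1
      _ = ∫⁻ x in F, ∑' lam : L, ENNReal.ofReal (gaussF n σ ((lam : E) + x)) := by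
          rw [h2, h3]
      _ ≤ ∫⁻ _x in F, ENNReal.ofReal S₀ :=
          lintegral_mono fun x => hS x
      _ = volume F * ENNReal.ofReal S₀ := by
          rw [MeasureTheory.lintegral_const, Measure.restrict_apply MeasurableSet.univ,
            Set.univ_inter, mul_comm]
  have h5 : (1 : ℝ) ≤ ((volume F) * ENNReal.ofReal S₀).toReal := by
    have := ENNReal.toReal_mono (by
      exact ENNReal.mul_ne_top hFfin ENNReal.ofReal_ne_top) h4
    simpa using this
  rw [ENNReal.toReal_mul, ENNReal.toReal_ofReal hS0nn] at h5
  rw [hcov]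
  exact h5

lemma covolume_pos' : 0 < ZLattice.covolume L volume := by
  rcases lt_or_eq_of_le (ENNReal.toReal_nonneg :
    (0:ℝ) ≤ ZLattice.covolume L volume) with h | h
  · exact h
  · exact absurd h.symm (ZLattice.covolume_ne_zero L volume)

end DensityUB
end part5

section part6
namespace DensityUB

variable {n : ℕ}
local notation "E" => EuclideanSpace ℝ (Fin n)

variable (L : Submodule ℤ (EuclideanSpace ℝ (Fin n))) [DiscreteTopology L] [IsZLattice ℝ L]

lemma gaussMass_lattice (σ : ℝ) :
    gaussMass n σ (L : Set (EuclideanSpace ℝ (Fin n))) = ∑' lam : L, gaussF n σ (lam : E) := rfl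

lemma gaussMass_coset (σ : ℝ) (t : EuclideanSpace ℝ (Fin n)) :
    gaussMass n σ (coset n (L : Set (EuclideanSpace ℝ (Fin n))) t)
      = ∑' lam : L, gaussF n σ ((lam : E) + t) := by
  unfold gaussMass
  let e : L ≃ ↥(coset n (L : Set (EuclideanSpace ℝ (Fin n))) t) :=
    { toFun := fun lam => ⟨(lam : E) + t, by
        show ((lam : E) + t) - t ∈ (L : Set (EuclideanSpace ℝ (Fin n)))
        simpa using lam.2⟩
      invFun := fun y => ⟨(y : E) - t, y.2⟩
      left_inv := fun lam => by ext; simp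
      right_inv := fun y => by ext; simp }
  exact (Equiv.tsum_eq e (fun y : ↥(coset n (L : Set (EuclideanSpace ℝ (Fin n))) t) =>
    gaussF n σ (y : E))).symm

lemma gaussMass_coset_nonneg (σ : ℝ) (t : EuclideanSpace ℝ (Fin n)) :
    0 ≤ gaussMass n σ (coset n (L : Set (EuclideanSpace ℝ (Fin n))) t) := by
  rw [gaussMass_coset]
  exact tsum_nonneg fun lam => gaussF_nonneg _ _

lemma voronoi_zero_mem : (0 : EuclideanSpace ℝ (Fin n)) ∈
    voronoi n (L : Set (EuclideanSpace ℝ (Fin n))) := by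
  intro y _
  rw [inner_zero_left]
  positivity

lemma flatness_nonneg_and_bound {σ : ℝ} (hσ : 0 < σ) {v : EuclideanSpace ℝ (Fin n)}
    (hv : v ∈ voronoi n (L : Set (EuclideanSpace ℝ (Fin n)))) :
    0 ≤ flatness n L σ ∧
    ZLattice.covolume L volume *
        gaussMass n σ (coset n (L : Set (EuclideanSpace ℝ (Fin n))) v)
      ≤ 1 + flatness n L σ := by
  set cov := ZLattice.covolume L volume with hcovdef
  have hcovnn : 0 ≤ cov := (covolume_pos' L).le
  set S₀ := ∑' lam : L, gaussF n σ (lam : E) with hS0def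
  have hS0nn : 0 ≤ S₀ := tsum_nonneg fun lam => gaussF_nonneg _ _
  have hmassle : ∀ x : EuclideanSpace ℝ (Fin n),
      gaussMass n σ (coset n (L : Set (EuclideanSpace ℝ (Fin n))) x) ≤ S₀ := by
    intro x
    rw [gaussMass_coset]
    exact mass_shift_le L hσ x
  have hbdd : BddAbove (Set.range (fun x : ↥(voronoi n (L : Set (EuclideanSpace ℝ (Fin n)))) =>
      |cov * gaussMass n σ (coset n (L : Set (EuclideanSpace ℝ (Fin n))) ↑x) - 1|)) := by
    refine ⟨cov * S₀ + 1, ?_⟩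
    rintro r ⟨x, rfl⟩
    have h0 := gaussMass_coset_nonneg L σ (x : EuclideanSpace ℝ (Fin n))
    have h1 := hmassle (x : EuclideanSpace ℝ (Fin n))
    have h2 : cov * gaussMass n σ (coset n (L : Set (EuclideanSpace ℝ (Fin n))) ↑x)
        ≤ cov * S₀ := mul_le_mul_of_nonneg_left h1 hcovnn
    have h3 : 0 ≤ cov * gaussMass n σ (coset n (L : Set (EuclideanSpace ℝ (Fin n))) ↑x) :=
      mul_nonneg hcovnn h0
    exact abs_le.2 ⟨by linarith, by linarith⟩
  haveI : Nonempty ↥(voronoi n (L : Set (EuclideanSpace ℝ (Fin n)))) :=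
    ⟨⟨0, voronoi_zero_mem L⟩⟩
  have hle : ∀ u : ↥(voronoi n (L : Set (EuclideanSpace ℝ (Fin n)))),
      |cov * gaussMass n σ (coset n (L : Set (EuclideanSpace ℝ (Fin n))) ↑u) - 1|
        ≤ flatness n L σ := fun u => le_ciSup hbdd u
  constructor
  · exact le_trans (abs_nonneg _) (hle ⟨0, voronoi_zero_mem L⟩)
  · have := (abs_le.1 (hle ⟨v, hv⟩)).2
    simpa using by linarith [this]

lemma exists_voronoi_rep (w : EuclideanSpace ℝ (Fin n)) :
    ∃ lam0 : L, (lam0 : E) - w ∈ voronoi n (L : Set (EuclideanSpace ℝ (Fin n))) := by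
  haveI : DiscreteTopology ↥L.toAddSubgroup := (inferInstance : DiscreteTopology ↥L)
  have hclosed : IsClosed (L : Set (EuclideanSpace ℝ (Fin n))) :=
    AddSubgroup.isClosed_of_discrete (H := L.toAddSubgroup)
  obtain ⟨y, hyL, hy⟩ := hclosed.exists_infDist_eq_dist ⟨0, L.zero_mem⟩ w
  refine ⟨⟨y, hyL⟩, ?_⟩
  intro z hz
  have hzL : z ∈ L := hz
  have hmin : dist w y ≤ dist w (y - z) := by
    rw [← hy]
    exact Metric.infDist_le_dist_of_mem (Submodule.sub_mem L hyL hzL)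
  rw [dist_eq_norm, dist_eq_norm] at hmin
  have h1 : ‖w - (y - z)‖ ^ 2 = ‖w - y‖ ^ 2 + 2 * ⟪w - y, z⟫ + ‖z‖ ^ 2 := by
    rw [show w - (y - z) = (w - y) + z from by abel, norm_add_sq_real]
  have h2 : ‖w - y‖ ^ 2 ≤ ‖w - (y - z)‖ ^ 2 := by
    have := norm_nonneg (w - y)
    nlinarith
  have h3 : ⟪(y : EuclideanSpace ℝ (Fin n)) - w, z⟫ = -⟪w - y, z⟫ := by
    rw [show (y : EuclideanSpace ℝ (Fin n)) - w = -(w - y) from by abel, inner_neg_left]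
  rw [h3]
  nlinarith [h1, h2]

end DensityUB
end part6

end lemmasDUB

open DensityUB

/-- the density `g` of the effective noise `W_eff = (1−α)X + αW`,
`X ~ D_{Λ',σ_s}`, `W ~ N(0,σ_w²Iₙ)`, satisfies `g(w) ≤ (1 + ε_{Λ'}(√α·σ_s))·f_{σ_eff}(w)`. -/
theorem density_upper_bound (n : ℕ) (L' : Submodule ℤ (EuclideanSpace ℝ (Fin n)))
    [DiscreteTopology L'] [IsZLattice ℝ L']
    (σs σw : ℝ) (hσs : 0 < σs) (hσw : 0 < σw)
    (α σeff : ℝ)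
    (hα : α = σs ^ 2 / (σs ^ 2 + σw ^ 2))
    (hσeff : σeff = Real.sqrt (σs ^ 2 * σw ^ 2 / (σs ^ 2 + σw ^ 2)))
    (w : EuclideanSpace ℝ (Fin n)) :
    (∑' x : (L' : Set (EuclideanSpace ℝ (Fin n))),
        (gaussF n σs x / gaussMass n σs (L' : Set (EuclideanSpace ℝ (Fin n)))) *
          gaussF n (α * σw) (w - (1 - α) • (x : EuclideanSpace ℝ (Fin n))))
      ≤ (1 + flatness n L' (Real.sqrt α * σs)) * gaussF n σeff w := by
  classical
  have hS : (0:ℝ) < σs ^ 2 + σw ^ 2 := by positivity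
  have hα0 : 0 < α := by rw [hα]; positivity
  have hα1 : α < 1 := by rw [hα, div_lt_one hS]; nlinarith
  set σ' := Real.sqrt α * σs with hσ'def
  have hσ'pos : 0 < σ' := mul_pos (Real.sqrt_pos.2 hα0) hσs
  have hσeffpos : 0 < σeff := by rw [hσeff]; exact Real.sqrt_pos.2 (by positivity)
  have hσ'sq : σ' ^ 2 = α * σs ^ 2 := by rw [hσ'def, mul_pow, Real.sq_sqrt hα0.le]
  have hσeffsq : σeff ^ 2 = σs ^ 2 * σw ^ 2 / (σs ^ 2 + σw ^ 2) := by
    rw [hσeff, Real.sq_sqrt (by positivity)]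
  set cov := ZLattice.covolume L' volume with hcovdef
  have hcovpos : 0 < cov := covolume_pos' L'
  set M := gaussMass n σs (L' : Set (EuclideanSpace ℝ (Fin n))) with hMdef
  have hcovM : 1 ≤ cov * M := by
    rw [hMdef, gaussMass_lattice]
    exact one_le_cov_mul_mass L' hσs
  have hMpos : 0 < M := by nlinarith
  have hkey : ∀ x : EuclideanSpace ℝ (Fin n),
      gaussF n σs x * gaussF n (α * σw) (w - (1 - α) • x)
        = gaussF n σ' (x - w) * gaussF n σeff w := by
    intro x
    unfold gaussF
    rw [mul_mul_mul_comm, mul_mul_mul_comm ((2 * π * σ' ^ 2) ^ (-(n:ℝ)/2))]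
    have h1 : σs ^ 2 + σw ^ 2 ≠ 0 := ne_of_gt hS
    have h2 : σs ≠ 0 := ne_of_gt hσs
    have h3 : σw ≠ 0 := ne_of_gt hσw
    congr 1
    · rw [← Real.mul_rpow (by positivity) (by positivity),
        ← Real.mul_rpow (by positivity) (by positivity)]
      congr 1
      rw [hσ'sq, hσeffsq, hα]
      field_simp
    · rw [← Real.exp_add, ← Real.exp_add]
      congr 1
      rw [norm_sub_sq_real x w]
      rw [show ‖w - (1 - α) • x‖ ^ 2
          = ‖w‖ ^ 2 - 2 * ((1 - α) * ⟪w, x⟫) + (1 - α) ^ 2 * ‖x‖ ^ 2 from by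
        rw [norm_sub_sq_real, real_inner_smul_right, norm_smul, Real.norm_eq_abs, mul_pow, sq_abs]]
      rw [real_inner_comm w x, hσ'sq, hσeffsq, hα]
      field_simp
      ring
  obtain ⟨lam0, hlam0⟩ := exists_voronoi_rep L' w
  have hflat := flatness_nonneg_and_bound L' hσ'pos hlam0
  have hcoe : (∑' x : (L' : Set (EuclideanSpace ℝ (Fin n))),
        gaussF n σ' ((x : EuclideanSpace ℝ (Fin n)) - w))
      = ∑' x : L', gaussF n σ' ((x : EuclideanSpace ℝ (Fin n)) - w) := rfl
  have hsum2 : (∑' x : (L' : Set (EuclideanSpace ℝ (Fin n))),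
        gaussF n σ' ((x : EuclideanSpace ℝ (Fin n)) - w))
      = gaussMass n σ' (coset n (L' : Set (EuclideanSpace ℝ (Fin n)))
          ((lam0 : EuclideanSpace ℝ (Fin n)) - w)) := by
    rw [gaussMass_coset, hcoe,
      ← Equiv.tsum_eq (Equiv.addRight lam0) (fun x : L' =>
        gaussF n σ' ((x : EuclideanSpace ℝ (Fin n)) - w))]
    refine tsum_congr fun lam => ?_
    rw [show ((Equiv.addRight lam0) lam : EuclideanSpace ℝ (Fin n))
        = (lam : EuclideanSpace ℝ (Fin n)) + (lam0 : EuclideanSpace ℝ (Fin n)) from rfl,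
      add_sub_assoc]
  have bound1 : gaussMass n σ' (coset n (L' : Set (EuclideanSpace ℝ (Fin n)))
      ((lam0 : EuclideanSpace ℝ (Fin n)) - w)) ≤ (1 + flatness n L' σ') / cov := by
    rw [le_div_iff₀ hcovpos, mul_comm]
    exact hflat.2
  have bound2 : gaussF n σeff w / M ≤ gaussF n σeff w * cov := by
    rw [div_le_iff₀ hMpos]
    calc gaussF n σeff w = gaussF n σeff w * 1 := (mul_one _).symm
      _ ≤ gaussF n σeff w * (cov * M) :=
          mul_le_mul_of_nonneg_left hcovM (gaussF_nonneg _ _)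
      _ = gaussF n σeff w * cov * M := by ring
  calc (∑' x : (L' : Set (EuclideanSpace ℝ (Fin n))),
        (gaussF n σs x / M) *
          gaussF n (α * σw) (w - (1 - α) • (x : EuclideanSpace ℝ (Fin n))))
      = (∑' x : (L' : Set (EuclideanSpace ℝ (Fin n))),
          gaussF n σ' ((x : EuclideanSpace ℝ (Fin n)) - w)) * (gaussF n σeff w / M) := by
        rw [← tsum_mul_right]
        refine tsum_congr fun x => ?_
        rw [div_mul_eq_mul_div, hkey, mul_div_assoc]
    _ ≤ ((1 + flatness n L' σ') / cov) * (gaussF n σeff w * cov) := by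
        rw [hsum2]
        refine mul_le_mul bound1 bound2 (div_nonneg (gaussF_nonneg _ _) hMpos.le)
          (div_nonneg (by linarith [hflat.1]) hcovpos.le)
    _ = (1 + flatness n L' σ') * gaussF n σeff w := by
        field_simp
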